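/- Let (X, S) be an aperiodic linearly recurrent subshift with constant K over a finite alphabet A, and let ζ be the partition of X into 1-cylinders. Then for every x ∈ X: 1/K ≤ R̲_ζ(x) ≤ R̄_ζ(x) ≤ K. -/

import Mathlib

open Filter Set
open scoped ENNReal

variable {A : Type*}

/-- The two-sided shift on `A^ℤ`. -/
def shiftZ (x : ℤ → A) : ℤ → A := fun n => x (n + 1)

/-- The finite word `u` occurs in the sequence `x` at position `i`. -/
def OccursAt (u : List A) (x : ℤ → A) (i : ℤ) : Prop :=
  ∀ j : Fin u.length, x (i + (j : ℕ)) = u.get j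

/-- The finite word `u` occurs (somewhere) in the sequence `x`. -/
def OccursIn (u : List A) (x : ℤ → A) : Prop := ∃ i : ℤ, OccursAt u x i

/-- The language `L(X)` of a subshift `X` : all finite words occurring in some
element of `X`. -/
def lang (X : Set (ℤ → A)) : Set (List A) := {u | ∃ x ∈ X, OccursIn u x}

/-- The language `L(x)` of a sequence `x` : all finite words occurring in `x`. -/
def langSeq (x : ℤ → A) : Set (List A) := {u | OccursIn u x}

/-- The number of occurrences of `u` as a factor of the finite word `v`. -/
noncomputable def occCount (u v : List A) : ℕ :=
  {i : ℕ | u <+: v.drop i ∧ i + u.length ≤ v.length}.ncard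

/-- `w` is a return word to `u` (for the language `L`) : `wu ∈ L`, `u` is a prefix of
`wu` and `u` has exactly two occurrences in `wu`. -/
def IsReturnWord (L : Set (List A)) (u w : List A) : Prop :=
  (w ++ u) ∈ L ∧ u <+: (w ++ u) ∧ occCount u (w ++ u) = 2

/-- `x` is uniformly recurrent: every word of `L(x)` occurs in `x` with bounded
gaps. -/
def UniformlyRecurrent (x : ℤ → A) : Prop :=
  ∀ u ∈ langSeq x, ∃ N : ℕ, ∀ i : ℤ, ∃ j : ℤ, i ≤ j ∧ j < i + N ∧ OccursAt u x j

/-- `x` is linearly recurrent with constant `K` : it is uniformly recurrent and every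
return word `w` to a word `u ∈ L(x)` satisfies `|w| ≤ K⬝|u|`. -/
def LinearlyRecurrentSeq (K : ℝ) (x : ℤ → A) : Prop :=
  UniformlyRecurrent x ∧
    ∀ u ∈ langSeq x, ∀ w : List A,
      IsReturnWord (langSeq x) u w → (w.length : ℝ) ≤ K * u.length

/-- A subshift: a closed shift-invariant subset of `A^ℤ`. -/
def IsSubshift [TopologicalSpace A] (X : Set (ℤ → A)) : Prop :=
  IsClosed X ∧ shiftZ '' X = X

/-- A minimal subshift: a nonempty subshift with no nonempty proper closed
shift-invariant subset. -/
def IsMinimalSubshift [TopologicalSpace A] (X : Set (ℤ → A)) : Prop :=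
  IsSubshift X ∧ X.Nonempty ∧
    ∀ Y ⊆ X, IsClosed Y → shiftZ '' Y = Y → Y = ∅ ∨ Y = X

/-- A linearly recurrent (LR) subshift with constant `K` : a minimal subshift
containing a linearly recurrent sequence with constant `K`. -/
def IsLRSubshift [TopologicalSpace A] (K : ℝ) (X : Set (ℤ → A)) : Prop :=
  IsMinimalSubshift X ∧ ∃ x ∈ X, LinearlyRecurrentSeq K x

/-- The subshift `X` is aperiodic: it contains no periodic point. -/
def AperiodicSubshift (X : Set (ℤ → A)) : Prop :=
  ∀ x ∈ X, ∀ n : ℕ, 0 < n → shiftZ^[n] x ≠ x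

/-- The fractional power `u^β` : the prefix of length `⌊|u|⬝β⌋` of `uuu⋯`. -/
noncomputable def fracPow (u : List A) (β : ℝ) : List A :=
  (List.flatten (List.replicate (⌈β⌉₊ + 1) u)).take ⌊(u.length : ℝ) * β⌋₊

/-- The Poincaré recurrence of a set `U` : `τ(U) = inf {k ≥ 1 : S^k U ∩ U ≠ ∅}`
(`∞` if no such `k` exists). -/
noncomputable def recOfSet {X : Type*} (T : X → X) (U : Set X) : ℝ≥0∞ :=
  sInf {t : ℝ≥0∞ | ∃ k : ℕ, 1 ≤ k ∧ (T^[k] '' U ∩ U).Nonempty ∧ t = k}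

/-- The atom `ζ_n(x)` of the refined partition `ζ ∨ S⁻¹ζ ∨ ⋯ ∨ S^{-n+1}ζ` of the
subshift `X`, where `ζ` is the partition into `1`-cylinders: it is the cylinder
`[x_0 x_1 ⋯ x_{n-1}]` (inside `X`). -/
def cylAtom {A : Type*} (X : Set (ℤ → A)) (n : ℕ) (x : ℤ → A) : Set (ℤ → A) :=
  {y ∈ X | ∀ k : ℕ, k < n → y (k : ℤ) = x (k : ℤ)}

/-- The lower local rate of Poincaré recurrence `R̲_ζ(x) = liminf_n τ(ζ_n(x))/n`
for the partition of the subshift `X` into `1`-cylinders. -/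
noncomputable def lowerRateCyl {A : Type*} (X : Set (ℤ → A)) (x : ℤ → A) : ℝ≥0∞ :=
  atTop.liminf fun n : ℕ => recOfSet shiftZ (cylAtom X n x) / (n : ℝ≥0∞)

/-- The upper local rate of Poincaré recurrence `R̄_ζ(x) = limsup_n τ(ζ_n(x))/n`
for the partition of the subshift `X` into `1`-cylinders. -/
noncomputable def upperRateCyl {A : Type*} (X : Set (ℤ → A)) (x : ℤ → A) : ℝ≥0∞ :=
  atTop.limsup fun n : ℕ => recOfSet shiftZ (cylAtom X n x) / (n : ℝ≥0∞)

lemma shiftZ_iterate_apply (x : ℤ → A) (k : ℕ) (n : ℤ) : shiftZ^[k] x n = x (n + k) := by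
  induction k generalizing x with
  | zero => simp
  | succ k ih =>
    rw [Function.iterate_succ_apply, ih]
    show x (n + k + 1) = _
    congr 1; push_cast; ring

def listOf (x : ℤ → A) (s : ℤ) (m : ℕ) : List A := (List.range m).map fun j : ℕ => x (s + (j : ℤ))

@[simp] lemma listOf_length (x : ℤ → A) (s : ℤ) (m : ℕ) : (listOf x s m).length = m := by
  rw [listOf, List.length_map, List.length_range]

lemma listOf_getElem (x : ℤ → A) (s : ℤ) {m j : ℕ} (h : j < (listOf x s m).length) :
    (listOf x s m)[j] = x (s + j) := by
  simp only [listOf, List.getElem_map, List.getElem_range]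

lemma occursAt_iff {u : List A} {x : ℤ → A} {i : ℤ} :
    OccursAt u x i ↔ ∀ (j : ℕ) (h : j < u.length), x (i + j) = u[j] := by
  constructor
  · intro H j h
    have := H ⟨j, h⟩
    simpa [List.get_eq_getElem] using this
  · intro H j
    have := H j j.2
    simpa [List.get_eq_getElem] using this

lemma occursAt_listOf (x : ℤ → A) (s : ℤ) (m : ℕ) : OccursAt (listOf x s m) x s := by
  rw [occursAt_iff]
  intro j h
  rw [listOf_getElem]

lemma listOf_mem_langSeq (x : ℤ → A) (s : ℤ) (m : ℕ) : listOf x s m ∈ langSeq x :=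
  ⟨s, occursAt_listOf x s m⟩

lemma gap_le {K : ℝ} {x₀ : ℤ → A} (hlr : LinearlyRecurrentSeq K x₀) {u : List A}
    (hn : 1 ≤ u.length) {s t : ℤ} (hst : s < t)
    (hs : OccursAt u x₀ s) (ht : OccursAt u x₀ t)
    (hno : ∀ r : ℤ, s < r → r < t → ¬ OccursAt u x₀ r) :
    ((t - s : ℤ) : ℝ) ≤ K * u.length := by
  have hts : (((t - s).toNat : ℕ) : ℤ) = t - s := Int.toNat_of_nonneg (by omega)
  obtain ⟨d, hd⟩ : ∃ d : ℕ, (d : ℤ) = t - s := ⟨(t - s).toNat, hts⟩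
  have hdpos : 0 < d := by omega
  have hsu : ∀ (l : ℕ) (h : l < u.length), x₀ (s + l) = u[l] := occursAt_iff.1 hs
  have htu : ∀ (l : ℕ) (h : l < u.length), x₀ (t + l) = u[l] := occursAt_iff.1 ht
  have hwu : listOf x₀ s d ++ u = listOf x₀ s (d + u.length) := by
    apply List.ext_getElem (by simp)
    intro l h1 h2
    rcases lt_or_ge l d with hl | hl
    · rw [List.getElem_append_left (by simpa using hl), listOf_getElem, listOf_getElem]
    · rw [List.getElem_append_right (by simpa using hl), listOf_getElem]
      simp only [listOf_length]
      have hln : l - d < u.length := by simp only [listOf_length] at h2; omega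
      rw [← htu (l - d) hln]
      congr 1
      omega
  have hchar : ∀ i : ℕ, i ≤ d →
      (u <+: (listOf x₀ s (d + u.length)).drop i ↔ OccursAt u x₀ (s + i)) := by
    intro i hi
    rw [List.prefix_iff_eq_take, occursAt_iff]
    constructor
    · intro H l hl
      have h3 : l < (List.take u.length (List.drop i (listOf x₀ s (d + u.length)))).length := by
        simp; omega
      have heq : u[l]'hl = (List.take u.length (List.drop i (listOf x₀ s (d + u.length))))[l]'h3 :=
        List.getElem_of_eq H hl
      rw [heq, List.getElem_take, List.getElem_drop, listOf_getElem]
      congr 1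
      push_cast
      ring
    · intro H
      apply List.ext_getElem (by simp; omega)
      intro l h1 h2
      rw [List.getElem_take, List.getElem_drop, listOf_getElem, ← H l h1]
      congr 1
      push_cast
      ring
  have hset : {i : ℕ | u <+: (listOf x₀ s (d + u.length)).drop i ∧
      i + u.length ≤ (listOf x₀ s (d + u.length)).length} = {0, d} := by
    ext i
    simp only [Set.mem_setOf_eq, Set.mem_insert_iff, Set.mem_singleton_iff, listOf_length]
    constructor
    · rintro ⟨h1, h2⟩
      have hi : i ≤ d := by omega
      have hocc := (hchar i hi).1 h1
      by_contra hcon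
      push_neg at hcon
      refine hno (s + i) (by omega) (by omega) hocc
    · rintro (rfl | rfl)
      · exact ⟨(hchar 0 (by omega)).2 (by simpa using hs), by omega⟩
      · refine ⟨(hchar _ le_rfl).2 ?_, by omega⟩
        have he : s + (i : ℤ) = t := by omega
        rw [he]
        exact ht
  have hcount : occCount u (listOf x₀ s d ++ u) = 2 := by
    rw [hwu, occCount, hset, Set.ncard_pair (by omega)]
  have hret : IsReturnWord (langSeq x₀) u (listOf x₀ s d) := by
    refine ⟨by rw [hwu]; exact listOf_mem_langSeq x₀ s (d + u.length), ?_, hcount⟩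
    rw [hwu, List.prefix_iff_eq_take]
    apply List.ext_getElem (by simp)
    intro l h1 h2
    rw [List.getElem_take, listOf_getElem, ← hsu l h1]
  have := hlr.2 u ⟨s, hs⟩ _ hret
  rw [listOf_length] at this
  have hcast : ((t - s : ℤ) : ℝ) = (d : ℝ) := by rw [← hd]; push_cast; ring
  rwa [hcast]

lemma occ_pair {K : ℝ} {x₀ : ℤ → A} (hlr : LinearlyRecurrentSeq K x₀) {u : List A}
    (hu : u ∈ langSeq x₀) (hn : 1 ≤ u.length) (i : ℤ) :
    ∃ p t : ℤ, p < i ∧ i ≤ t ∧ OccursAt u x₀ p ∧ OccursAt u x₀ t ∧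
      ((t : ℝ) - p ≤ K * u.length) := by
  obtain ⟨N, hN⟩ := hlr.1 u hu
  obtain ⟨p, ⟨hpocc, hpi⟩, hpmax⟩ := Int.exists_greatest_of_bdd
      (P := fun z => OccursAt u x₀ z ∧ z < i)
      ⟨i, fun z hz => le_of_lt hz.2⟩
      (by obtain ⟨j, h1, h2, h3⟩ := hN (i - N); exact ⟨j, h3, by omega⟩)
  obtain ⟨t, ⟨htocc, hti⟩, htmin⟩ := Int.exists_least_of_bdd
      (P := fun z => OccursAt u x₀ z ∧ i ≤ z)
      ⟨i, fun z hz => hz.2⟩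
      (by obtain ⟨j, h1, h2, h3⟩ := hN i; exact ⟨j, h3, h1⟩)
  have hno : ∀ r : ℤ, p < r → r < t → ¬ OccursAt u x₀ r := by
    intro r h1 h2 hocc
    rcases lt_or_ge r i with h | h
    · have := hpmax r ⟨hocc, h⟩; omega
    · have := htmin r ⟨hocc, h⟩; omega
  have := gap_le hlr hn (lt_of_lt_of_le hpi hti) hpocc htocc hno
  refine ⟨p, t, hpi, hti, hpocc, htocc, ?_⟩
  push_cast at this
  linarith

lemma K_ge_one {K : ℝ} {x₀ : ℤ → A} (hlr : LinearlyRecurrentSeq K x₀) : 1 ≤ K := by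
  have hu : [x₀ 0] ∈ langSeq x₀ := ⟨0, by
    rw [occursAt_iff]
    intro j h
    simp only [List.length_singleton] at h
    have : j = 0 := by omega
    subst this
    simp⟩
  obtain ⟨p, t, h1, h2, _, _, h5⟩ := occ_pair hlr hu (by simp) 0
  simp only [List.length_singleton, Nat.cast_one, mul_one] at h5
  have : (1 : ℝ) ≤ (t : ℝ) - p := by
    have h : p + 1 ≤ t := by omega
    have : ((p : ℝ) + 1) ≤ (t : ℝ) := by exact_mod_cast h
    linarith
  linarith

lemma shift_mem {X : Set (ℤ → A)} [TopologicalSpace A] (hX : shiftZ '' X = X)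
    {x : ℤ → A} (hx : x ∈ X) (k : ℤ) : (fun n => x (n + k)) ∈ X := by
  induction k using Int.induction_on with
  | zero => simpa using hx
  | succ k ih =>
    have h2 : (fun n : ℤ => x (n + (k + 1))) = shiftZ (fun n => x (n + k)) := by
      funext n
      show x (n + (k + 1)) = x (n + 1 + k)
      congr 1; ring
    rw [h2, ← hX]
    exact Set.mem_image_of_mem _ ih
  | pred k ih =>
    rw [← hX] at ih
    obtain ⟨y, hy, hsy⟩ := ih
    have h2 : y = fun n : ℤ => x (n + (-(k:ℤ) - 1)) := by
      funext n
      have := congrFun hsy (n - 1)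
      show y n = _
      rw [show y n = shiftZ y (n - 1) by simp [shiftZ], this]
      congr 1; ring
    exact h2 ▸ hy

def shiftHomeo [TopologicalSpace A] : (ℤ → A) ≃ₜ (ℤ → A) where
  toFun := shiftZ
  invFun := fun x n => x (n - 1)
  left_inv := fun x => by funext n; simp [shiftZ]
  right_inv := fun x => by funext n; simp [shiftZ]
  continuous_toFun := continuous_pi fun n => continuous_apply (n + 1)
  continuous_invFun := continuous_pi fun n => continuous_apply (n - 1)

lemma approx [TopologicalSpace A] [DiscreteTopology A] {X : Set (ℤ → A)}
    (hmin : IsMinimalSubshift X) {x₀ : ℤ → A} (hx₀ : x₀ ∈ X) {x : ℤ → A} (hx : x ∈ X)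
    (a : ℤ) (m : ℕ) : ∃ c : ℤ, ∀ l : ℕ, l < m → x₀ (c + l) = x (a + l) := by
  set O : Set (ℤ → A) := Set.range (fun k : ℤ => fun n : ℤ => x₀ (n + k)) with hO
  have hOX : O ⊆ X := by
    rintro _ ⟨k, rfl⟩
    exact shift_mem hmin.1.2 hx₀ k
  have hYsub : closure O ⊆ X := closure_minimal hOX hmin.1.1
  have himg : shiftZ '' closure O = closure O := by
    have h1 : shiftZ '' O = O := by
      apply Set.eq_of_subset_of_subset
      · rintro _ ⟨_, ⟨k, rfl⟩, rfl⟩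
        refine ⟨k + 1, ?_⟩
        funext n
        show x₀ (n + (k + 1)) = x₀ (n + 1 + k)
        congr 1; ring
      · rintro _ ⟨k, rfl⟩
        refine ⟨fun n => x₀ (n + (k - 1)), ⟨k - 1, rfl⟩, ?_⟩
        funext n
        show x₀ (n + 1 + (k - 1)) = x₀ (n + k)
        congr 1; ring
    have := (shiftHomeo (A := A)).image_closure O
    rw [show (shiftHomeo (A := A)) '' O = shiftZ '' O from rfl, h1] at this
    exact this
  have hYX : closure O = X := by
    rcases hmin.2.2 (closure O) hYsub isClosed_closure himg with h | h
    · exfalso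
      have hmem : x₀ ∈ closure O := subset_closure ⟨0, by funext n; simp⟩
      rw [h] at hmem
      exact hmem
    · exact h
  have hxcl : x ∈ closure O := hYX ▸ hx
  have hex : ∃ y ∈ O, ∀ l : ℕ, l < m → y (a + l) = x (a + l) := by
    have hVopen : IsOpen {y : ℤ → A | ∀ l : ℕ, l < m → y (a + l) = x (a + l)} := by
      have hVeq : {y : ℤ → A | ∀ l : ℕ, l < m → y (a + l) = x (a + l)} =
          ⋂ l ∈ Finset.range m, (fun y : ℤ → A => y (a + l)) ⁻¹' {x (a + l)} := by
        ext y
        simp [Set.mem_iInter]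
      rw [hVeq]
      apply isOpen_biInter_finset
      intro l _
      exact (continuous_apply (a + (l : ℤ))).isOpen_preimage _ (isOpen_discrete _)
    rcases mem_closure_iff.mp hxcl _ hVopen (fun l hl => rfl) with ⟨y, hyV, hyO⟩
    exact ⟨y, hyO, hyV⟩
  obtain ⟨_, ⟨k, rfl⟩, hy⟩ := hex
  refine ⟨a + k, fun l hl => ?_⟩
  have := hy l hl
  rw [← this]
  congr 1; ring

lemma tau_upper [TopologicalSpace A] [DiscreteTopology A] {X : Set (ℤ → A)} {K : ℝ}
    (hmin : IsMinimalSubshift X) {x₀ : ℤ → A} (hx₀ : x₀ ∈ X)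
    (hlr : LinearlyRecurrentSeq K x₀)
    {x : ℤ → A} (hx : x ∈ X) {n : ℕ} (hn : 1 ≤ n) :
    ∃ d : ℕ, 1 ≤ d ∧ (d : ℝ) ≤ K * n ∧
      (shiftZ^[d] '' cylAtom X n x ∩ cylAtom X n x).Nonempty := by
  have hu : listOf x 0 n ∈ langSeq x₀ := by
    obtain ⟨c, hc⟩ := approx hmin hx₀ hx 0 n
    refine ⟨c, occursAt_iff.2 fun l hl => ?_⟩
    rw [listOf_length] at hl
    rw [listOf_getElem, hc l hl]
  obtain ⟨p, t, hp, ht, hpocc, htocc, hKb⟩ :=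
    occ_pair hlr hu (by rw [listOf_length]; exact hn) 0
  obtain ⟨d, hd⟩ : ∃ d : ℕ, (d : ℤ) = t - p := ⟨(t - p).toNat, Int.toNat_of_nonneg (by omega)⟩
  have hpocc' := occursAt_iff.1 hpocc
  have htocc' := occursAt_iff.1 htocc
  refine ⟨d, by omega, ?_, ?_⟩
  · rw [listOf_length] at hKb
    have : ((d : ℤ) : ℝ) = (t : ℝ) - p := by exact_mod_cast congrArg (Int.cast : ℤ → ℝ) hd
    push_cast at this ⊢
    linarith
  · set y : ℤ → A := fun m => x₀ (m + p) with hy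
    have hyX : y ∈ X := shift_mem hmin.1.2 hx₀ p
    have hyC : y ∈ cylAtom X n x := by
      refine ⟨hyX, fun l hl => ?_⟩
      have h1 := hpocc' l (by rw [listOf_length]; exact hl)
      rw [listOf_getElem] at h1
      show x₀ ((l : ℤ) + p) = x ((l : ℤ))
      rw [show (l : ℤ) + p = p + l by ring, h1]
      norm_num
    have hzC : shiftZ^[d] y ∈ cylAtom X n x := by
      have hzX : shiftZ^[d] y ∈ X := by
        have : shiftZ^[d] y = fun m => x₀ (m + t) := by
          funext m
          rw [shiftZ_iterate_apply]
          show x₀ (m + d + p) = _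
          congr 1; omega
        rw [this]
        exact shift_mem hmin.1.2 hx₀ t
      refine ⟨hzX, fun l hl => ?_⟩
      rw [shiftZ_iterate_apply]
      have h1 := htocc' l (by rw [listOf_length]; exact hl)
      rw [listOf_getElem] at h1
      show x₀ ((l : ℤ) + d + p) = x ((l : ℤ))
      rw [show (l : ℤ) + d + p = t + l by omega, h1]
      norm_num
    exact ⟨shiftZ^[d] y, Set.mem_inter (Set.mem_image_of_mem _ hyC) hzC⟩

lemma tau_lower_core [TopologicalSpace A] [DiscreteTopology A] {X : Set (ℤ → A)} {K : ℝ}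
    (hmin : IsMinimalSubshift X) {x₀ : ℤ → A} (hx₀ : x₀ ∈ X)
    (hlr : LinearlyRecurrentSeq K x₀) (hap : AperiodicSubshift X)
    {x : ℤ → A} (hx : x ∈ X) {n k : ℕ} (hk : 1 ≤ k)
    (hne : (shiftZ^[k] '' cylAtom X n x ∩ cylAtom X n x).Nonempty) :
    (n : ℝ) < K * (k + 1) + 1 := by
  have hK1 : 1 ≤ K := K_ge_one hlr
  by_contra hcon
  push_neg at hcon
  obtain ⟨z, ⟨y, hyC, rfl⟩, hzC⟩ := hne
  have hyX : y ∈ X := hyC.1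
  have hyx : ∀ l : ℕ, l < n → y l = x l := hyC.2
  have hzx : ∀ l : ℕ, l < n → y ((l : ℤ) + k) = x l := by
    intro l hl
    have := hzC.2 l hl
    rwa [shiftZ_iterate_apply] at this
  obtain ⟨c, hc⟩ := approx hmin hx₀ hyX 0 (n + k)
  have hc' : ∀ l : ℕ, l < n + k → x₀ (c + l) = y l := by
    intro l hl
    rw [hc l hl]
    norm_num
  have hper : ∀ l : ℕ, l < n → x₀ (c + l + k) = x₀ (c + l) := by
    intro l hl
    have a1 : x₀ (c + ((l + k : ℕ) : ℤ)) = y ((l + k : ℕ) : ℤ) := hc' (l + k) (by omega)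
    have a2 : x₀ (c + (l : ℤ)) = y l := hc' l (by omega)
    have a3 : y (((l + k : ℕ) : ℤ)) = x l := by
      push_cast
      exact hzx l hl
    have a4 : y (l : ℤ) = x l := hyx l hl
    rw [show c + (l : ℤ) + k = c + ((l + k : ℕ) : ℤ) by push_cast; ring, a1, a3, ← a4, ← a2]
  have hper' : ∀ j : ℤ, x₀ (j + k) = x₀ j := by
    intro j
    have hw : listOf x₀ j (k + 1) ∈ langSeq x₀ := listOf_mem_langSeq x₀ j (k + 1)
    obtain ⟨p, t, hp, ht, _, htocc, hKb⟩ :=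
      occ_pair hlr hw (by rw [listOf_length]; omega) c
    rw [listOf_length] at hKb
    have hpc : (p : ℝ) ≤ (c : ℝ) - 1 := by
      have : p ≤ c - 1 := by omega
      exact_mod_cast this
    have htcR : (t : ℝ) - c ≤ K * (k + 1) - 1 := by push_cast at hKb ⊢; linarith
    obtain ⟨τ, hτ⟩ : ∃ τ : ℕ, (τ : ℤ) = t - c := ⟨(t - c).toNat, Int.toNat_of_nonneg (by omega)⟩
    have hτn : τ < n := by
      have h1 : ((τ : ℤ) : ℝ) = (t : ℝ) - c := by exact_mod_cast congrArg (Int.cast : ℤ → ℝ) hτ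
      have h2 : (τ : ℝ) ≤ K * (k + 1) - 1 := by push_cast at h1 ⊢; linarith
      have h3 : (τ : ℝ) < (n : ℝ) := by linarith
      exact_mod_cast h3
    have h1 : x₀ (t + k) = x₀ t := by
      have := hper τ hτn
      rw [show c + (τ : ℤ) + k = t + k by omega, show c + (τ : ℤ) = t by omega] at this
      exact this
    have hocc := occursAt_iff.1 htocc
    have hw0 : x₀ t = x₀ j := by
      have := hocc 0 (by rw [listOf_length]; omega)
      rw [listOf_getElem] at this
      simpa using this
    have hwk : x₀ (t + k) = x₀ (j + k) := by
      have := hocc k (by rw [listOf_length]; omega)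
      rw [listOf_getElem] at this
      exact this
    rw [← hwk, h1, hw0]
  exact hap x₀ hx₀ k hk (funext fun j => by rw [shiftZ_iterate_apply]; exact hper' j)

/-- For an aperiodic linearly recurrent subshift with constant `K`
and the partition `ζ` into `1`-cylinders, every `x ∈ X` satisfies
`1/K ≤ R̲_ζ(x) ≤ R̄_ζ(x) ≤ K`. -/
theorem stmt12 {A : Type*} [Fintype A] [TopologicalSpace A] [DiscreteTopology A]
    (X : Set (ℤ → A)) (K : ℝ)
    (hLR : IsLRSubshift K X) (hap : AperiodicSubshift X) :
    ∀ x ∈ X,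
      ENNReal.ofReal (1 / K) ≤ lowerRateCyl X x ∧
        lowerRateCyl X x ≤ upperRateCyl X x ∧
          upperRateCyl X x ≤ ENNReal.ofReal K := by
  obtain ⟨hmin, x₀, hx₀, hlr⟩ := hLR
  have hK1 : 1 ≤ K := K_ge_one hlr
  have hK0 : 0 < K := lt_of_lt_of_le one_pos hK1
  intro x hx
  refine ⟨?_, Filter.liminf_le_limsup, ?_⟩
  · -- lower bound
    have h0 : Tendsto (fun n : ℕ => 1/K - (K+1)/K * (1/(n:ℝ))) atTop (nhds (1/K)) := by
      have h1 := tendsto_one_div_atTop_nhds_zero_nat.const_mul ((K+1)/K)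
      have h2 := (tendsto_const_nhds : Tendsto (fun _ : ℕ => 1/K) atTop (nhds (1/K))).sub h1
      simpa using h2
    have hg : Tendsto (fun n : ℕ => ENNReal.ofReal (1/K - (K+1)/K * (1/(n:ℝ)))) atTop
        (nhds (ENNReal.ofReal (1/K))) :=
      (ENNReal.continuous_ofReal.tendsto _).comp h0
    have hEv : ∀ᶠ n : ℕ in atTop, ENNReal.ofReal (1/K - (K+1)/K * (1/(n:ℝ))) ≤
        recOfSet shiftZ (cylAtom X n x) / (n : ℝ≥0∞) := by
      filter_upwards [eventually_ge_atTop 1] with n hn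
      have hτ : ENNReal.ofReal (((n:ℝ) - K - 1)/K) ≤ recOfSet shiftZ (cylAtom X n x) := by
        apply le_sInf
        rintro t ⟨k, hk1, hkne, rfl⟩
        have hcore := tau_lower_core hmin hx₀ hlr hap hx hk1 hkne
        have h2 : ((n:ℝ) - K - 1)/K ≤ (k:ℝ) := by
          rw [div_le_iff₀ hK0]
          push_cast at hcore ⊢
          linarith
        calc ENNReal.ofReal (((n:ℝ) - K - 1)/K) ≤ ENNReal.ofReal (k:ℝ) :=
              ENNReal.ofReal_le_ofReal h2
          _ = (k : ℝ≥0∞) := ENNReal.ofReal_natCast k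
      have hn0 : (0:ℝ) < (n:ℝ) := by
        have : (1:ℝ) ≤ (n:ℝ) := by exact_mod_cast hn
        linarith
      calc ENNReal.ofReal (1/K - (K+1)/K*(1/(n:ℝ)))
          = ENNReal.ofReal ((((n:ℝ) - K - 1)/K)/(n:ℝ)) := by
            congr 1
            field_simp
            ring
        _ = ENNReal.ofReal (((n:ℝ) - K - 1)/K) / ENNReal.ofReal (n:ℝ) :=
              ENNReal.ofReal_div_of_pos hn0
        _ = ENNReal.ofReal (((n:ℝ) - K - 1)/K) / (n:ℝ≥0∞) := by rw [ENNReal.ofReal_natCast]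
        _ ≤ recOfSet shiftZ (cylAtom X n x) / (n:ℝ≥0∞) := ENNReal.div_le_div_right hτ _
    simp only [lowerRateCyl]
    rw [← hg.liminf_eq]
    exact Filter.liminf_le_liminf hEv
  · -- upper bound
    have hEv : ∀ᶠ n : ℕ in atTop,
        recOfSet shiftZ (cylAtom X n x) / (n : ℝ≥0∞) ≤ ENNReal.ofReal K := by
      filter_upwards [eventually_ge_atTop 1] with n hn
      obtain ⟨d, hd1, hdK, hdne⟩ := tau_upper hmin hx₀ hlr hx hn
      have hτ : recOfSet shiftZ (cylAtom X n x) ≤ (d:ℝ≥0∞) := sInf_le ⟨d, hd1, hdne, rfl⟩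
      have hdc : (d : ℝ≥0∞) ≤ ENNReal.ofReal K * (n:ℝ≥0∞) := by
        rw [← ENNReal.ofReal_natCast d, ← ENNReal.ofReal_natCast n, ← ENNReal.ofReal_mul hK0.le]
        exact ENNReal.ofReal_le_ofReal hdK
      have hne0 : (n:ℝ≥0∞) ≠ 0 := Nat.cast_ne_zero.mpr (by omega)
      calc recOfSet shiftZ (cylAtom X n x) / (n:ℝ≥0∞)
          ≤ (ENNReal.ofReal K * (n:ℝ≥0∞)) / (n:ℝ≥0∞) :=
            ENNReal.div_le_div_right (hτ.trans hdc) _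
        _ = ENNReal.ofReal K * ((n:ℝ≥0∞) / (n:ℝ≥0∞)) := mul_div_assoc _ _ _
        _ = ENNReal.ofReal K := by rw [ENNReal.div_self hne0 (ENNReal.natCast_ne_top n), mul_one]
    simp only [upperRateCyl]
    exact Filter.limsup_le_of_le (h := hEv)
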